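/- Let K be a nonempty closed subset of ℝ², let z ∈ ℝ² and ρ > 0, and suppose K is star-shaped with respect to every point of the open ball B(z,ρ), i.e. for every x with dist(x,z) < ρ and every y ∈ K the closed segment [x,y] is contained in K. Let z_b ≠ z_e be points such that the open segment between z_b and z_e is contained in the topological frontier of K. Then the two-dimensional Lebesgue measure of the triangle conv{z_b, z_e, z} (the convex hull of the three points) satisfies vol(conv{z_b, z_e, z}) ≥ (1/2) · dist(z_b, z_e) · ρ. -/

import Mathlib

open Metric MeasureTheory

section Aux

local notation "E2" => EuclideanSpace ℝ (Fin 2)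

/-- Lower bound for the volume of the standard triangle. -/
lemma aux_half_le_volume_stdTri :
    ENNReal.ofReal (1 / 2) ≤
      volume {x : E2 | 0 ≤ x 0 ∧ 0 ≤ x 1 ∧ x 0 + x 1 ≤ 1} := by
  have h1 := (EuclideanSpace.volume_preserving_symm_measurableEquiv_toLp (Fin 2)).measure_preimage_emb
    (MeasurableEquiv.toLp 2 (Fin 2 → ℝ)).symm.measurableEmbedding
  have h2 := (volume_preserving_finTwoArrow ℝ).measure_preimage_emb
    (MeasurableEquiv.finTwoArrow).measurableEmbedding
  set T : Set (ℝ × ℝ) := {p | 0 ≤ p.1 ∧ 0 ≤ p.2 ∧ p.1 + p.2 ≤ 1} with hT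
  have key : volume {x : E2 | 0 ≤ x 0 ∧ 0 ≤ x 1 ∧ x 0 + x 1 ≤ 1} = volume T := by
    have e1 : {x : E2 | 0 ≤ x 0 ∧ 0 ≤ x 1 ∧ x 0 + x 1 ≤ 1}
        = (MeasurableEquiv.toLp 2 (Fin 2 → ℝ)).symm ⁻¹'
          ((MeasurableEquiv.finTwoArrow : (Fin 2 → ℝ) ≃ᵐ ℝ × ℝ) ⁻¹' T) := by
      ext x
      simp [MeasurableEquiv.finTwoArrow, hT]
    rw [e1, h1, h2]
  rw [key]
  have hsub : regionBetween (fun _ => (0:ℝ)) (fun x => 1 - x) (Set.Icc 0 1) ⊆ T := by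
    rintro ⟨x, y⟩ ⟨hx, hy⟩
    simp only [Set.mem_Icc] at hx
    simp only [Set.mem_Ioo] at hy
    exact ⟨hx.1, le_of_lt hy.1, by linarith [hy.2]⟩
  have hreg : volume (regionBetween (fun _ => (0:ℝ)) (fun x => 1 - x) (Set.Icc 0 1))
      = ENNReal.ofReal (1 / 2) := by
    have hfint : IntegrableOn (fun _ : ℝ => (0:ℝ)) (Set.Icc 0 1) volume :=
      (continuous_const.continuousOn).integrableOn_compact isCompact_Icc
    have hgc : Continuous (fun x : ℝ => 1 - x) := by continuity
    have hgint : IntegrableOn (fun x : ℝ => 1 - x) (Set.Icc 0 1) volume :=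
      (hgc.continuousOn).integrableOn_compact isCompact_Icc
    rw [Measure.volume_eq_prod, volume_regionBetween_eq_integral hfint hgint
      measurableSet_Icc
      (by intro x hx; simp only [Set.mem_Icc] at hx; linarith [hx.2])]
    congr 1
    have e0 : ((fun x : ℝ => 1 - x) - fun _ : ℝ => (0:ℝ)) = fun y : ℝ => 1 - y := by
      funext y; simp
    rw [e0]
    have e2 : (∫ y in Set.Icc (0:ℝ) 1, (1 - y))
        = ∫ y in (0:ℝ)..1, (1 - y) := by
      rw [intervalIntegral.integral_of_le (by norm_num),
        ← MeasureTheory.integral_Icc_eq_integral_Ioc]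
    rw [e2]
    rw [intervalIntegral.integral_sub intervalIntegrable_const
      intervalIntegral.intervalIntegrable_id, integral_id]
    norm_num
  exact hreg ▸ measure_mono hsub

/-- The standard triangle is contained in the hull of `{e₀, e₁, 0}`. -/
lemma aux_stdTri_subset_hull :
    {x : E2 | 0 ≤ x 0 ∧ 0 ≤ x 1 ∧ x 0 + x 1 ≤ 1} ⊆
      convexHull ℝ ({(PiLp.basisFun 2 ℝ (Fin 2)) 0, (PiLp.basisFun 2 ℝ (Fin 2)) 1, 0} : Set E2) := by
  intro x hx
  obtain ⟨h0, h1, hs⟩ := hx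
  set b := PiLp.basisFun 2 ℝ (Fin 2) with hb
  have hcm : (Finset.univ : Finset (Fin 3)).centerMass
      ![x 0, x 1, 1 - x 0 - x 1] ![b 0, b 1, 0] = x := by
    rw [Finset.centerMass, Fin.sum_univ_three, Fin.sum_univ_three]
    simp only [Matrix.cons_val_zero, Matrix.cons_val_one, Matrix.head_cons,
      Matrix.cons_val_two, Matrix.tail_cons, smul_zero, add_zero]
    have hsum : x 0 + x 1 + (1 - x 0 - x 1) = 1 := by ring
    rw [hsum, inv_one, one_smul]
    ext i
    fin_cases i <;> simp [hb, PiLp.basisFun_apply]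
  rw [← hcm]
  refine Finset.centerMass_mem_convexHull (s := {b 0, b 1, 0}) _ ?_ ?_ ?_
  · intro i _
    fin_cases i <;> simp <;> linarith
  · rw [Fin.sum_univ_three]
    simp only [Matrix.cons_val_zero, Matrix.cons_val_one, Matrix.head_cons,
      Matrix.cons_val_two, Matrix.tail_cons]
    norm_num
  · intro i _
    fin_cases i <;> simp

/-- A point on an open segment from a point of the kernel ball to a point of `K`
is in the interior of `K`. -/
lemma aux_mem_interior (K : Set E2) (z : E2) (ρ : ℝ)
    (hstar : ∀ x, dist x z < ρ → ∀ y ∈ K, segment ℝ x y ⊆ K)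
    (x : E2) (hx : dist x z < ρ) (y : E2) (hy : y ∈ K)
    (p : E2) (hp : p ∈ openSegment ℝ x y) : p ∈ interior K := by
  obtain ⟨a, c, ha, hc, hac, rfl⟩ := hp
  set δ := ρ - dist x z with hδ
  have hδ0 : 0 < δ := by simp only [hδ]; linarith
  rw [mem_interior]
  refine ⟨ball (a • x + c • y) (a * δ), ?_, isOpen_ball, mem_ball_self (by positivity)⟩
  intro q hq
  set x' := x + a⁻¹ • (q - (a • x + c • y)) with hx'
  have hq' : q = a • x' + c • y := by
    rw [hx', smul_add, smul_smul, mul_inv_cancel₀ (ne_of_gt ha), one_smul]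
    abel
  have hdx : dist x' x < δ := by
    rw [hx', dist_eq_norm]
    simp only [add_sub_cancel_left, norm_smul, norm_inv, Real.norm_eq_abs,
      abs_of_pos ha]
    rw [mem_ball, dist_eq_norm] at hq
    calc a⁻¹ * ‖q - (a • x + c • y)‖ < a⁻¹ * (a * δ) :=
          mul_lt_mul_of_pos_left hq (by positivity)
      _ = δ := by field_simp
  have hx'z : dist x' z < ρ := by
    calc dist x' z ≤ dist x' x + dist x z := dist_triangle _ _ _
      _ < δ + dist x z := by linarith
      _ = ρ := by simp [hδ]
  exact hstar x' hx'z y hy ⟨a, c, le_of_lt ha, le_of_lt hc, hac, hq'.symm⟩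

/-- Every point of the line through `zb, ze` has distance at least `ρ` from `z`. -/
lemma aux_line_far (K : Set E2) (hKne : K.Nonempty) (hKcl : IsClosed K)
    (z : E2) (ρ : ℝ) (hρ : 0 < ρ)
    (hstar : ∀ x, dist x z < ρ → ∀ y ∈ K, segment ℝ x y ⊆ K)
    (zb ze : E2) (hseg : openSegment ℝ zb ze ⊆ frontier K) :
    ∀ t : ℝ, ρ ≤ dist (zb + t • (ze - zb)) z := by
  have hballK : ball z ρ ⊆ K := by
    intro x hx
    obtain ⟨y, hy⟩ := hKne
    exact hstar x (mem_ball.mp hx) y hy (left_mem_segment ℝ x y)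
  have hballint : ball z ρ ⊆ interior K := interior_maximal hballK isOpen_ball
  have hfr : segment ℝ zb ze ⊆ frontier K := by
    rw [← closure_openSegment]
    exact closure_minimal hseg isClosed_frontier
  have hKfr : frontier K ⊆ K := hKcl.frontier_subset
  have hdisj : ∀ p ∈ frontier K, p ∉ interior K := fun p hp hint =>
    Set.disjoint_left.mp disjoint_interior_frontier hint hp
  intro t
  by_contra hlt
  push_neg at hlt
  have hqball : zb + t • (ze - zb) ∈ ball z ρ := mem_ball.mpr hlt
  rcases lt_or_ge t 0 with ht0 | ht0
  · -- t < 0 : zb ∈ openSegment q ze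
    set s := t / (t - 1) with hs
    have ht1 : t - 1 < 0 := by linarith
    have hs0 : 0 < s := div_pos_of_neg_of_neg ht0 ht1
    have hs1 : s < 1 := by
      rw [hs, div_lt_iff_of_neg ht1]
      linarith
    have hmem : zb ∈ openSegment ℝ (zb + t • (ze - zb)) ze := by
      refine ⟨1 - s, s, by linarith, hs0, by ring, ?_⟩
      have hne1 : t - 1 ≠ 0 := ne_of_lt ht1
      have hco : (1 - s) * t + s = 0 := by
        rw [hs]; field_simp; ring
      have he : (1 - s) • (zb + t • (ze - zb)) + s • ze
          = zb + ((1 - s) * t + s) • (ze - zb) := by module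
      rw [he, hco, zero_smul, add_zero]
    have hze : ze ∈ K := hKfr (hfr (right_mem_segment ℝ zb ze))
    exact hdisj zb (hfr (left_mem_segment ℝ zb ze))
      (aux_mem_interior K z ρ hstar _ hlt ze hze zb hmem)
  · rcases le_or_gt t 1 with ht1 | ht1
    · -- 0 ≤ t ≤ 1 : the point is in the segment
      have hmem : zb + t • (ze - zb) ∈ segment ℝ zb ze := by
        refine ⟨1 - t, t, by linarith, ht0, by ring, ?_⟩
        module
      exact hdisj _ (hfr hmem) (hballint hqball)
    · -- 1 < t : ze ∈ openSegment q zb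
      set s := (t - 1) / t with hs
      have hs0 : 0 < s := div_pos (by linarith) (by linarith)
      have hs1 : s < 1 := by
        rw [hs, div_lt_one (by linarith)]
        linarith
      have hmem : ze ∈ openSegment ℝ (zb + t • (ze - zb)) zb := by
        refine ⟨1 - s, s, by linarith, hs0, by ring, ?_⟩
        have htne : t ≠ 0 := by positivity
        have hco : (1 - s) * t = 1 := by
          rw [hs]; field_simp; ring
        have he : (1 - s) • (zb + t • (ze - zb)) + s • zb
            = zb + ((1 - s) * t) • (ze - zb) := by module
        rw [he, hco, one_smul]
        abel
      have hzb : zb ∈ K := hKfr (hfr (left_mem_segment ℝ zb ze))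
      exact hdisj ze (hfr (right_mem_segment ℝ zb ze))
        (aux_mem_interior K z ρ hstar _ hlt zb hzb ze hmem)

/-- Lagrange identity consequence: distance from origin to the line. -/
lemma aux_cross_lower (u w : E2) (hw : w ≠ 0) (ρ : ℝ) (hρ : 0 ≤ ρ)
    (h : ∀ t : ℝ, ρ ≤ ‖u + t • w‖) :
    ρ * ‖w‖ ≤ |u 0 * w 1 - u 1 * w 0| := by
  have hw01 : w 0 ≠ 0 ∨ w 1 ≠ 0 := by
    by_contra hcon
    push_neg at hcon
    refine hw (PiLp.ext fun i => ?_)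
    fin_cases i
    · exact hcon.1
    · exact hcon.2
  have hwc : 0 < w 0 ^ 2 + w 1 ^ 2 := by
    rcases hw01 with h0 | h0 <;> positivity
  set c := w 0 ^ 2 + w 1 ^ 2 with hc
  set t := -(u 0 * w 0 + u 1 * w 1) / c with ht
  have hnorm : ∀ v : E2, ‖v‖ ^ 2 = v 0 ^ 2 + v 1 ^ 2 := by
    intro v
    rw [EuclideanSpace.norm_eq, Real.sq_sqrt (by positivity)]
    rw [Fin.sum_univ_two]
    simp [sq_abs]
  have h1 : ρ ≤ ‖u + t • w‖ := h t
  have h2 : ρ ^ 2 ≤ (u 0 + t * w 0) ^ 2 + (u 1 + t * w 1) ^ 2 := by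
    have := pow_le_pow_left₀ hρ h1 2
    rwa [hnorm, PiLp.add_apply, PiLp.add_apply, PiLp.smul_apply, PiLp.smul_apply,
      smul_eq_mul, smul_eq_mul] at this
  have key : ((u 0 + t * w 0) ^ 2 + (u 1 + t * w 1) ^ 2) * c
      = (u 0 * w 1 - u 1 * w 0) ^ 2 := by
    have hc0 : w 0 ^ 2 + w 1 ^ 2 ≠ 0 := ne_of_gt hwc
    rw [ht, hc]
    field_simp
    ring
  have h3 : ρ ^ 2 * c ≤ (u 0 * w 1 - u 1 * w 0) ^ 2 := by
    rw [← key]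
    exact mul_le_mul_of_nonneg_right h2 (le_of_lt hwc)
  have hwn : ‖w‖ ^ 2 = c := hnorm w
  nlinarith [abs_nonneg (u 0 * w 1 - u 1 * w 0), sq_abs (u 0 * w 1 - u 1 * w 0),
    norm_nonneg w, mul_nonneg hρ (norm_nonneg w)]

end Aux

/-- The auxiliary triangle over a frontier edge of a star-shaped set has area at least
`(1/2) · h_E · ρ`. -/
theorem area_auxiliary_triangle_lower_bound
    (K : Set (EuclideanSpace ℝ (Fin 2))) (hKne : K.Nonempty) (hKcl : IsClosed K)
    (z : EuclideanSpace ℝ (Fin 2)) (ρ : ℝ) (hρ : 0 < ρ)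
    (hstar : ∀ x, dist x z < ρ → ∀ y ∈ K, segment ℝ x y ⊆ K)
    (zb ze : EuclideanSpace ℝ (Fin 2)) (hne : zb ≠ ze)
    (hseg : openSegment ℝ zb ze ⊆ frontier K) :
    ENNReal.ofReal ((1 / 2) * dist zb ze * ρ) ≤
      volume (convexHull ℝ ({zb, ze, z} : Set (EuclideanSpace ℝ (Fin 2)))) := by
  classical
  set u : EuclideanSpace ℝ (Fin 2) := zb - z with hu
  set v : EuclideanSpace ℝ (Fin 2) := ze - z with hv
  set w : EuclideanSpace ℝ (Fin 2) := ze - zb with hw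
  have hwne : w ≠ 0 := fun hcon => hne (by rwa [hw, sub_eq_zero, eq_comm] at hcon)
  have hfar : ∀ t : ℝ, ρ ≤ ‖u + t • w‖ := by
    intro t
    have := aux_line_far K hKne hKcl z ρ hρ hstar zb ze hseg t
    rw [dist_eq_norm] at this
    rw [show u + t • w = zb + t • (ze - zb) - z by rw [hu, hw]; abel]
    exact this
  have hcross : ρ * ‖w‖ ≤ |u 0 * w 1 - u 1 * w 0| :=
    aux_cross_lower u w hwne ρ (le_of_lt hρ) hfar
  set b := PiLp.basisFun 2 ℝ (Fin 2) with hb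
  set M : EuclideanSpace ℝ (Fin 2) →ₗ[ℝ] EuclideanSpace ℝ (Fin 2) :=
    b.constr ℝ ![u, v] with hM
  have hM0 : M (b 0) = u := by rw [hM, Module.Basis.constr_basis]; rfl
  have hM1 : M (b 1) = v := by rw [hM, Module.Basis.constr_basis]; rfl
  have hdet : LinearMap.det M = u 0 * v 1 - u 1 * v 0 := by
    rw [← LinearMap.det_toMatrix b M, Matrix.det_fin_two]
    simp only [LinearMap.toMatrix_apply, hM0, hM1]
    rw [hb]
    simp only [PiLp.basisFun_repr]
    ring
  have hdetcross : u 0 * v 1 - u 1 * v 0 = u 0 * w 1 - u 1 * w 0 := by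
    rw [hw, hv, hu]
    simp only [PiLp.sub_apply]
    ring
  have him : M '' ({b 0, b 1, 0} : Set (EuclideanSpace ℝ (Fin 2))) = {u, v, 0} := by
    rw [Set.image_insert_eq, Set.image_insert_eq, Set.image_singleton, hM0, hM1, map_zero]
  have htrans : (fun x => z + x) '' ({u, v, 0} : Set (EuclideanSpace ℝ (Fin 2)))
      = {zb, ze, z} := by
    have e1 : z + (zb - z) = zb := by abel
    have e2 : z + (ze - z) = ze := by abel
    rw [Set.image_insert_eq, Set.image_insert_eq, Set.image_singleton, hu, hv]
    rw [e1, e2, add_zero]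
  have hhull : convexHull ℝ ({zb, ze, z} : Set (EuclideanSpace ℝ (Fin 2)))
      = (fun x => z + x) '' (M '' (convexHull ℝ ({b 0, b 1, 0} :
          Set (EuclideanSpace ℝ (Fin 2))))) := by
    have haff := (AffineEquiv.constVAdd ℝ (EuclideanSpace ℝ (Fin 2)) z).toAffineMap.image_convexHull
      ({u, v, 0} : Set (EuclideanSpace ℝ (Fin 2)))
    have haff' : (fun x => z + x) '' (convexHull ℝ ({u, v, 0} :
        Set (EuclideanSpace ℝ (Fin 2))))
        = convexHull ℝ ((fun x => z + x) '' ({u, v, 0} :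
            Set (EuclideanSpace ℝ (Fin 2)))) := by
      exact haff
    rw [← htrans, ← haff', ← him, ← M.image_convexHull]
  rw [hhull]
  rw [Set.image_add_left, measure_preimage_add, Measure.addHaar_image_linearMap]
  have hvolS : ENNReal.ofReal (1 / 2) ≤
      volume (convexHull ℝ ({b 0, b 1, 0} : Set (EuclideanSpace ℝ (Fin 2)))) :=
    le_trans aux_half_le_volume_stdTri (measure_mono (hb ▸ aux_stdTri_subset_hull))
  calc ENNReal.ofReal ((1 / 2) * dist zb ze * ρ)
      ≤ ENNReal.ofReal (|LinearMap.det M| * (1 / 2)) := by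
        apply ENNReal.ofReal_le_ofReal
        rw [hdet, hdetcross]
        have hdistw : dist zb ze = ‖w‖ := by rw [hw, dist_eq_norm, norm_sub_rev]
        rw [hdistw]
        nlinarith [hcross]
    _ = ENNReal.ofReal |LinearMap.det M| * ENNReal.ofReal (1 / 2) := by
        rw [ENNReal.ofReal_mul (abs_nonneg _)]
    _ ≤ ENNReal.ofReal |LinearMap.det M| *
          volume (convexHull ℝ ({b 0, b 1, 0} : Set (EuclideanSpace ℝ (Fin 2)))) :=
        mul_le_mul_right hvolS _
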